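/- Let H be an enumerated K₄-free graph and X a type of H such that the neighborhood of t in X contains an edge. Then every graph in Age_H(X) is triangle-free. -/

import Mathlib

/-- Auxiliary relation defining the graph G ⊕ (X₀,…,X_{n−1}): on an n-labeled graph `G`
with labelling `χ`, extended by the vertices 0,…,ℓ−1 of the enumerated graph `H`, where
the type `X_c` on level ℓ has neighbourhood `nbr c` of its type vertex t. -/
def oplusRel {V : Type} (G : SimpleGraph V) {n : ℕ} (χ : V → Fin n)
    (H : SimpleGraph ℕ) (ℓ : ℕ) (nbr : Fin n → Set ℕ) :
    (V ⊕ Fin ℓ) → (V ⊕ Fin ℓ) → Prop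
  | Sum.inl a, Sum.inl b => G.Adj a b
  | Sum.inl a, Sum.inr i => (i : ℕ) ∈ nbr (χ a)
  | Sum.inr i, Sum.inr j => H.Adj (i : ℕ) (j : ℕ)
  | Sum.inr _, Sum.inl _ => False

/-- The graph G ⊕ (X₀,…,X_{n−1}) on vertex set V ⊕ Fin ℓ. -/
def oplus {V : Type} (G : SimpleGraph V) {n : ℕ} (χ : V → Fin n)
    (H : SimpleGraph ℕ) (ℓ : ℕ) (nbr : Fin n → Set ℕ) : SimpleGraph (V ⊕ Fin ℓ) :=
  SimpleGraph.fromRel (oplusRel G χ H ℓ nbr)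

/-- G ∈ Age_H(X₀,…,X_{n−1}): the graph G ⊕ (X₀,…,X_{n−1}) embeds into H. -/
def AgeMem {V : Type} [Fintype V] (G : SimpleGraph V) {n : ℕ} (χ : V → Fin n)
    (H : SimpleGraph ℕ) (ℓ : ℕ) (nbr : Fin n → Set ℕ) : Prop :=
  Nonempty ((oplus G χ H ℓ nbr) ↪g H)

/-- if H is an enumerated K₄-free graph and X is a type of H whose type
vertex t has an edge in its neighbourhood, then every graph in Age_H(X) is triangle-free. -/
theorem age_triangle_free_of_edge (H : SimpleGraph ℕ) (hH : H.CliqueFree 4)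
    (ℓ : ℕ) (nbr : Set ℕ) (hsub : nbr ⊆ Set.Iio ℓ)
    (a b : ℕ) (ha : a ∈ nbr) (hb : b ∈ nbr) (hab : H.Adj a b)
    {V : Type} [Fintype V] (G : SimpleGraph V) (χ : V → Fin 1)
    (hAge : AgeMem G χ H ℓ (fun _ => nbr)) :
    G.CliqueFree 3 := by
  classical
  obtain ⟨f⟩ := hAge
  have hO : (oplus G χ H ℓ (fun _ => nbr)).CliqueFree 4 := hH.comap f.isContained
  intro s hs
  obtain ⟨u, v, w, huv, huw, hvw, rfl⟩ := Finset.card_eq_three.mp hs.2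
  have hAuv : G.Adj u v := hs.1 (by simp) (by simp) huv
  have hAuw : G.Adj u w := hs.1 (by simp) (by simp) huw
  have hAvw : G.Adj v w := hs.1 (by simp) (by simp) hvw
  set aF : Fin ℓ := ⟨a, hsub ha⟩ with haF
  have hadj : ∀ x : V, (oplus G χ H ℓ (fun _ => nbr)).Adj (Sum.inl x) (Sum.inr aF) := by
    intro x
    refine ⟨by simp, Or.inl ?_⟩
    simpa [oplusRel] using ha
  have hadjG : ∀ x y : V, G.Adj x y →
      (oplus G χ H ℓ (fun _ => nbr)).Adj (Sum.inl x) (Sum.inl y) := by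
    intro x y hxy
    exact ⟨by simp [hxy.ne], Or.inl hxy⟩
  refine hO {Sum.inl u, Sum.inl v, Sum.inl w, Sum.inr aF} ⟨?_, ?_⟩
  · intro x hx y hy hxy
    simp only [Finset.coe_insert, Set.mem_insert_iff, Finset.coe_singleton,
      Set.mem_singleton_iff] at hx hy
    rcases hx with rfl|rfl|rfl|rfl <;> rcases hy with rfl|rfl|rfl|rfl <;>
      first
        | exact absurd rfl hxy
        | exact hadjG _ _ hAuv | exact hadjG _ _ hAuw | exact hadjG _ _ hAvw
        | exact (hadjG _ _ hAuv).symm | exact (hadjG _ _ hAuw).symm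
        | exact (hadjG _ _ hAvw).symm
        | exact hadj _ | exact (hadj _).symm
  · simp [Finset.card_insert_of_notMem, huv, huw, hvw]
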